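/- Let y ∈ ℝ^{n+1} have its centered fractional parts sorted in descending order: {y_1} ≥ {y_2} ≥ … ≥ {y_{n+1}}. For i = 0, 1, …, n define u_i = ⌊y⌉ + Σ_{j=1}^{i} e_j (where e_j is the j-th standard basis vector), z_i = y − u_i, and d_i = ‖z_i‖² − (Σ_j (z_i)_j)²/(n+1). If m ∈ {0, 1, …, n} satisfies d_m ≤ d_i for all i ∈ {0, 1, …, n}, then Q u_m is a closest point in A_n* to y. (Correctness of the proposed nearest-point algorithm for A_n*.) -/

import Mathlib

/-- The orthogonal projection onto the hyperplane orthogonal to the all-ones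
vector: `(Q x) i = x i - (∑ j, x j) / (n+1)`. -/
noncomputable def Q {n : ℕ} (x : EuclideanSpace ℝ (Fin (n+1))) :
    EuclideanSpace ℝ (Fin (n+1)) :=
  WithLp.toLp 2 (fun i => x i - (∑ j, x j) / (n+1))

/-- Componentwise nearest-integer rounding of a vector (viewed in `ℝ^{n+1}`). -/
noncomputable def roundVec {n : ℕ} (y : EuclideanSpace ℝ (Fin (n+1))) :
    EuclideanSpace ℝ (Fin (n+1)) :=
  WithLp.toLp 2 (fun i => (round (y i) : ℝ))

/-- The centered fractional part `{t} = t - ⌊t⌉ ∈ [-1/2, 1/2)`. -/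
noncomputable def fract (t : ℝ) : ℝ := t - round t

/-- `∑_{j=1}^{m} e_j`: the sum of the first `m` standard basis vectors of `ℝ^{n+1}`. -/
noncomputable def basisSum (n : ℕ) (m : ℕ) : EuclideanSpace ℝ (Fin (n+1)) :=
  ∑ i ∈ Finset.univ.filter (fun i : Fin (n+1) => (i : ℕ) < m),
    EuclideanSpace.single i (1 : ℝ)

/-- `u_m = ⌊y⌉ + ∑_{j=1}^{m} e_j`. -/
noncomputable def u {n : ℕ} (y : EuclideanSpace ℝ (Fin (n+1))) (m : ℕ) :
    EuclideanSpace ℝ (Fin (n+1)) :=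
  roundVec y + basisSum n m

/-- `d_m = ‖z_m‖² − (∑_j (z_m)_j)²/(n+1)` where `z_m = y - u_m`. -/
noncomputable def d {n : ℕ} (y : EuclideanSpace ℝ (Fin (n+1))) (m : ℕ) : ℝ :=
  ‖y - u y m‖ ^ 2 - (∑ j, (y - u y m) j) ^ 2 / (n+1)

/-- The lattice `A_n*`: the image under `Q` of the integer vectors in `ℝ^{n+1}`. -/
noncomputable def Anstar (n : ℕ) : Set (EuclideanSpace ℝ (Fin (n+1))) :=
  { x | ∃ k : Fin (n+1) → ℤ, x = Q (WithLp.toLp 2 (fun i => (k i : ℝ))) }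

section helpers
variable {n : ℕ}

lemma norm_sq_eq (x : EuclideanSpace ℝ (Fin (n+1))) : ‖x‖^2 = ∑ i, (x i)^2 := by
  rw [EuclideanSpace.norm_eq, Real.sq_sqrt (by positivity)]
  simp [Real.norm_eq_abs, sq_abs]

lemma sumE (b : Fin (n+1) → ℝ) (t : ℝ) :
    ∑ i, (b i + t)^2 = (∑ i, (b i)^2) + 2*t*(∑ i, b i) + ((n:ℝ)+1)*t^2 := by
  have h : ∀ i : Fin (n+1), (b i + t)^2 = (b i)^2 + 2*t*(b i) + t^2 := fun i => by ring
  simp only [h, Finset.sum_add_distrib, ← Finset.mul_sum, Finset.sum_const,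
    Finset.card_univ, Fintype.card_fin, nsmul_eq_mul]
  push_cast; ring

lemma QnormSq (z : EuclideanSpace ℝ (Fin (n+1))) :
    ‖Q z‖^2 = ‖z‖^2 - (∑ i, z i)^2/((n:ℝ)+1) := by
  have h1 : ‖Q z‖^2 = ∑ i, (z i + (-((∑ j, z j)/((n:ℝ)+1))))^2 := by
    rw [norm_sq_eq]
    exact Finset.sum_congr rfl fun i _ => by
      show ((fun i => z i - (∑ j, z j) / ((n:ℝ)+1)) i)^2 = _
      ring
  rw [h1, sumE, norm_sq_eq]
  have hn : ((n:ℝ)+1) ≠ 0 := by positivity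
  field_simp
  ring

lemma Q_eq (z : EuclideanSpace ℝ (Fin (n+1))) :
    ‖Q z‖^2 = ∑ i, (z i - (∑ j, z j)/((n:ℝ)+1))^2 := by
  rw [norm_sq_eq]; rfl

lemma Q_le (z : EuclideanSpace ℝ (Fin (n+1))) (t : ℝ) :
    ‖Q z‖^2 ≤ ∑ i, (z i - t)^2 := by
  have h : ∑ i, (z i - t)^2 = (∑ i, (z i)^2) + 2*(-t)*(∑ i, z i) + ((n:ℝ)+1)*(-t)^2 := by
    simpa [sub_eq_add_neg] using sumE (fun i => z i) (-t)
  rw [QnormSq, norm_sq_eq, h]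
  have hn : (0:ℝ) < (n:ℝ)+1 := by positivity
  set S := ∑ i, z i with hS
  have hd : S^2/((n:ℝ)+1) * ((n:ℝ)+1) = S^2 := div_mul_cancel₀ _ hn.ne'
  nlinarith [sq_nonneg (S - ((n:ℝ)+1)*t), hn]

lemma Q_shift (a b : EuclideanSpace ℝ (Fin (n+1))) (c : ℝ) (h : ∀ i, a i = b i + c) :
    Q a = Q b := by
  ext i
  show a i - (∑ j, a j)/((n:ℝ)+1) = b i - (∑ j, b j)/((n:ℝ)+1)
  have hs : ∑ j, a j = (∑ j, b j) + ((n:ℝ)+1)*c := by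
    simp only [h, Finset.sum_add_distrib, Finset.sum_const, Finset.card_univ,
      Fintype.card_fin, nsmul_eq_mul]
    push_cast; ring
  rw [h i, hs]
  have hn : ((n:ℝ)+1) ≠ 0 := by positivity
  field_simp
  ring

lemma dist_eq (y v : EuclideanSpace ℝ (Fin (n+1))) :
    ‖y - Q v‖^2 = ‖Q (y - v)‖^2 + (∑ i, y i)^2/((n:ℝ)+1) := by
  have h1 : ‖y - Q v‖^2 = ∑ i, ((y i - v i) + (∑ j, v j)/((n:ℝ)+1))^2 := by
    rw [norm_sq_eq]
    refine Finset.sum_congr rfl fun i _ => ?_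
    show (y i - (v i - (∑ j, v j)/((n:ℝ)+1)))^2 = _
    ring
  rw [h1, sumE (fun i => y i - v i) _, QnormSq, norm_sq_eq]
  have h3 : ∑ i, ((y - v) i)^2 = ∑ i, (y i - v i)^2 := rfl
  have h4 : ∑ i, (y - v) i = (∑ i, y i) - (∑ i, v i) := by
    show ∑ i, (y i - v i) = _
    rw [Finset.sum_sub_distrib]
  rw [h3, h4]
  simp only [Finset.sum_sub_distrib]
  have hn : ((n:ℝ)+1) ≠ 0 := by positivity
  field_simp
  ring

lemma basisSum_apply (m : ℕ) (i : Fin (n+1)) :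
    basisSum n m i = if (i:ℕ) < m then 1 else 0 := by
  unfold basisSum
  rw [show (∑ j ∈ Finset.univ.filter (fun j : Fin (n+1) => (j : ℕ) < m),
      EuclideanSpace.single j (1:ℝ)) i
    = ∑ j ∈ Finset.univ.filter (fun j : Fin (n+1) => (j : ℕ) < m),
      EuclideanSpace.single j (1:ℝ) i from by rw [WithLp.ofLp_sum]; exact Finset.sum_apply i _ _]
  simp [EuclideanSpace.single_apply]

lemma u_apply (y : EuclideanSpace ℝ (Fin (n+1))) (m : ℕ) (i : Fin (n+1)) :
    u y m i = (round (y i) : ℝ) + (if (i:ℕ) < m then 1 else 0) := by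
  show roundVec y i + basisSum n m i = _
  rw [basisSum_apply]; rfl

end helpers

lemma fract_lb (t : ℝ) : -(1/2) ≤ fract t := by
  unfold fract; rw [round_eq]
  have := Int.floor_le (t + 1/2); linarith

lemma fract_ub (t : ℝ) : fract t < 1/2 := by
  unfold fract; rw [round_eq]
  have := Int.lt_floor_add_one (t + 1/2); linarith

lemma round_shift (x : ℝ) (σ : ℝ) (hσ0 : 0 ≤ σ) (hσ1 : σ < 1) :
    round (x - σ) = round x + (if fract x < σ - 1/2 then -1 else 0) := by
  have hx : x - σ = (round x : ℤ) + (fract x - σ) := by unfold fract; ring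
  rw [hx, round_intCast_add]
  congr 1
  by_cases h : fract x < σ - 1/2
  · rw [if_pos h, round_eq]
    have h1 := fract_lb x
    apply Int.floor_eq_iff.mpr
    constructor
    · push_cast; linarith
    · push_cast; linarith
  · rw [if_neg h]
    have h2 := fract_ub x
    rw [round_eq]
    apply Int.floor_eq_zero_iff.mpr
    constructor
    · simp only [not_lt] at h; linarith
    · linarith

lemma prefix_of_monotone {N : ℕ} (P : Fin (N+1) → Prop) [DecidablePred P]
    (hmono : ∀ i j : Fin (N+1), i ≤ j → P i → P j) (i : Fin (N+1)) :
    ¬ P i ↔ (i : ℕ) < (Finset.univ.filter fun j => ¬ P j).card := by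
  set F := Finset.univ.filter fun j : Fin (N+1) => ¬ P j with hF
  constructor
  · intro hi
    have hsub : Finset.Iic i ⊆ F := by
      intro j hj
      simp only [hF, Finset.mem_filter, Finset.mem_univ, true_and]
      exact fun hPj => hi (hmono j i (Finset.mem_Iic.mp hj) hPj)
    have := Finset.card_le_card hsub
    rw [Fin.card_Iic] at this
    omega
  · intro hlt hPi
    have hsub : F ⊆ Finset.Iio i := by
      intro j hj
      simp only [hF, Finset.mem_filter, Finset.mem_univ, true_and] at hj
      rw [Finset.mem_Iio]
      by_contra hij
      exact hj (hmono i j (le_of_not_gt hij) hPi)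
    have := Finset.card_le_card hsub
    rw [Fin.card_Iio] at this
    omega

/-- Correctness of the nearest-point algorithm for `A_n*`: if the centered
fractional parts of `y` are sorted in descending order and `m ∈ {0,…,n}`
minimizes `d_i` over `i ∈ {0,…,n}`, then `Q u_m` is a closest point in
`A_n*` to `y`. -/
theorem algorithm_correct (n : ℕ) (y : EuclideanSpace ℝ (Fin (n+1)))
    (hsort : ∀ i j : Fin (n+1), i ≤ j → fract (y j) ≤ fract (y i))
    (m : ℕ) (hm : m ≤ n) (hmin : ∀ i ≤ n, d y m ≤ d y i) :
    Q (u y m) ∈ Anstar n ∧ ∀ w ∈ Anstar n, ‖y - Q (u y m)‖ ≤ ‖y - w‖ := by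
  classical
  have d_eq : ∀ M : ℕ, d y M = ‖Q (y - u y M)‖^2 := fun M => (QnormSq (y - u y M)).symm
  constructor
  · refine ⟨fun i => round (y i) + (if (i:ℕ) < m then 1 else 0),
      congrArg Q (PiLp.ext fun i => ?_)⟩
    rw [u_apply]
    split_ifs with h <;> simp [h, add_comm]
  · rintro w ⟨k, rfl⟩
    obtain ⟨kR, hkR⟩ : ∃ kR : EuclideanSpace ℝ (Fin (n+1)),
        kR = WithLp.toLp 2 (fun i => ((k i : ℤ) : ℝ)) := ⟨_, rfl⟩
    rw [← hkR]
    suffices hsq : ‖y - Q (u y m)‖^2 ≤ ‖y - Q kR‖^2 by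
      have h1 := norm_nonneg (y - Q (u y m))
      have h2 := norm_nonneg (y - Q kR)
      nlinarith
    rw [dist_eq y (u y m), dist_eq y kR]
    have key : ‖Q (y - u y m)‖^2 ≤ ‖Q (y - kR)‖^2 := by
      obtain ⟨s, hs⟩ : ∃ s : ℝ, s = (∑ j, (y - kR) j) / ((n:ℝ)+1) := ⟨_, rfl⟩
      obtain ⟨k'R, hk'R⟩ : ∃ k'R : EuclideanSpace ℝ (Fin (n+1)),
          k'R = WithLp.toLp 2 (fun i => ((round (y i - s) : ℤ) : ℝ)) := ⟨_, rfl⟩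
      -- structure of the componentwise rounding of y - s•1
      obtain ⟨M, hMle, c, hc⟩ :
          ∃ M ≤ n, ∃ c : ℤ, ∀ i, u y M i = ((round (y i - s) : ℤ) : ℝ) + c := by
        have hσ0 : (0:ℝ) ≤ Int.fract s := Int.fract_nonneg s
        have hσ1 : Int.fract s < 1 := Int.fract_lt_one s
        have hround : ∀ i : Fin (n+1), round (y i - s)
            = round (y i) + (if fract (y i) < Int.fract s - 1/2 then -1 else 0) - ⌊s⌋ := by
          intro i
          have h1 : y i - s = (y i - Int.fract s) - (⌊s⌋ : ℝ) := by
            have := Int.floor_add_fract s; linarith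
          rw [h1, round_sub_intCast, round_shift (y i) _ hσ0 hσ1]
        set P : Fin (n+1) → Prop := fun i => fract (y i) < Int.fract s - 1/2 with hP
        have hmono : ∀ i j : Fin (n+1), i ≤ j → P i → P j := fun i j hij hPi =>
          lt_of_le_of_lt (hsort i j hij) hPi
        have hM₀ : ∀ i : Fin (n+1),
            ¬ P i ↔ (i:ℕ) < (Finset.univ.filter fun j => ¬ P j).card :=
          prefix_of_monotone P hmono
        set M₀ := (Finset.univ.filter fun j : Fin (n+1) => ¬ P j).card with hM₀def
        have hM₀le : M₀ ≤ n + 1 := by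
          have := Finset.card_le_card (Finset.filter_subset
            (fun j : Fin (n+1) => ¬ P j) Finset.univ)
          simpa using this
        by_cases hcase : M₀ = n + 1
        · refine ⟨0, Nat.zero_le n, ⌊s⌋, fun i => ?_⟩
          have hnPi : ¬ P i := (hM₀ i).mpr (by omega)
          rw [u_apply, hround i, if_neg hnPi]
          push_cast
          simp
        · refine ⟨M₀, by omega, ⌊s⌋ + 1, fun i => ?_⟩
          rw [u_apply, hround i]
          by_cases hPi : P i
          · have hni : ¬ ((i:ℕ) < M₀) := fun h => ((hM₀ i).mpr h) hPi
            rw [if_neg hni, if_pos hPi]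
            push_cast; ring
          · have hi : (i:ℕ) < M₀ := (hM₀ i).mp hPi
            rw [if_pos hi, if_neg hPi]
            push_cast; ring
      have hQeq : Q (y - k'R) = Q (y - u y M) :=
        Q_shift _ _ ((c : ℤ) : ℝ) (fun i => by
          rw [hk'R]
          show y i - ((round (y i - s) : ℤ) : ℝ) = y i - u y M i + ((c : ℤ) : ℝ)
          rw [hc i]; ring)
      calc ‖Q (y - u y m)‖^2 = d y m := (d_eq m).symm
        _ ≤ d y M := hmin M hMle
        _ = ‖Q (y - u y M)‖^2 := d_eq M
        _ = ‖Q (y - k'R)‖^2 := by rw [hQeq]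
        _ ≤ ∑ i, ((y - k'R) i - s)^2 := Q_le _ s
        _ ≤ ∑ i, ((y - kR) i - s)^2 := by
            refine Finset.sum_le_sum fun i _ => ?_
            have e1 : (y - k'R) i - s
                = (y i - s) - ((round (y i - s) : ℤ) : ℝ) := by
              rw [hk'R]
              show y i - ((round (y i - s) : ℤ) : ℝ) - s = _
              ring
            have e2 : (y - kR) i - s = (y i - s) - ((k i : ℤ) : ℝ) := by
              rw [hkR]
              show y i - ((k i : ℤ) : ℝ) - s = _
              ring
            rw [e1, e2]
            calc ((y i - s) - ((round (y i - s) : ℤ) : ℝ))^2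
                = |(y i - s) - ((round (y i - s) : ℤ) : ℝ)|^2 := (sq_abs _).symm
              _ ≤ |(y i - s) - ((k i : ℤ) : ℝ)|^2 :=
                  pow_le_pow_left₀ (abs_nonneg _) (round_le (y i - s) (k i)) 2
              _ = ((y i - s) - ((k i : ℤ) : ℝ))^2 := sq_abs _
        _ = ‖Q (y - kR)‖^2 := by rw [hs]; exact (Q_eq _).symm
    linarith
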